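/- Let x, p ∈ ℝ^n with ‖x‖ = 1 and x^T p = 0, and for α ≥ 0 define x(α) = [ (1 − α²‖p‖²) x − 2α p ] / (1 + α²‖p‖²). Then ‖x(α) − x‖ = 2α‖p‖ / √(1 + α²‖p‖²). -/

import Mathlib

/-- for unit `x` and `p` with `xᵀp = 0`, the curve
`x(α) = [(1 − α²‖p‖²) x − 2α p] / (1 + α²‖p‖²)` satisfies, for `α ≥ 0`,
`‖x(α) − x‖ = 2α‖p‖ / √(1 + α²‖p‖²)`. -/
theorem curvilinear_step_length
    {n : ℕ} (x p : EuclideanSpace ℝ (Fin n)) (hx : ‖x‖ = 1)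
    (hxp : (inner ℝ x p : ℝ) = 0)
    (xc : ℝ → EuclideanSpace ℝ (Fin n))
    (hxc : ∀ α : ℝ, xc α = (1 / (1 + α ^ 2 * ‖p‖ ^ 2)) •
      ((1 - α ^ 2 * ‖p‖ ^ 2) • x - (2 * α) • p)) :
    ∀ α : ℝ, 0 ≤ α →
      ‖xc α - x‖ = 2 * α * ‖p‖ / Real.sqrt (1 + α ^ 2 * ‖p‖ ^ 2) := by
  intro α hα
  set t : ℝ := α ^ 2 * ‖p‖ ^ 2 with ht
  have ht0 : 0 ≤ t := by positivity
  have h1 : (0:ℝ) < 1 + t := by linarith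
  have h2 : (2*α*‖p‖)^2 = 4*t := by rw [ht]; ring
  have key : xc α - x = (1/(1+t)) • ((-(2*t)) • x - (2*α) • p) := by
    rw [hxc]
    match_scalars <;> (field_simp; try (rw [ht]); try ring)
  have hinner : (inner ℝ ((-(2*t)) • x) ((2*α) • p) : ℝ) = 0 := by
    rw [real_inner_smul_left, real_inner_smul_right, hxp]; ring
  have hsq : ‖(-(2*t)) • x - (2*α) • p‖ ^ 2 = 4*t^2 + 4*t := by
    rw [norm_sub_sq_real, hinner, norm_smul, norm_smul, hx]
    simp only [Real.norm_eq_abs]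
    rw [abs_of_nonpos (by linarith : -(2*t) ≤ 0), abs_of_nonneg (by linarith : 0 ≤ 2*α)]
    nlinarith [h2]
  have hfin : ‖xc α - x‖ ^ 2 = (2*α*‖p‖)^2 / (1+t) := by
    rw [key, norm_smul, mul_pow, hsq, Real.norm_eq_abs,
      abs_of_pos (by positivity : (0:ℝ) < 1/(1+t)), h2]
    field_simp
    ring
  have hnn : 0 ≤ 2*α*‖p‖ := by positivity
  rw [← Real.sqrt_sq (norm_nonneg (xc α - x)), hfin,
    Real.sqrt_div (by positivity) , Real.sqrt_sq hnn]
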